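/- arXiv:1408.3604 — 2 statements merged into one kernel-verified Lean document; each statement's English description precedes it below -/
import Mathlib

section
/- Let L and L' be distributive abstract logics and h : Expr(L) → Expr(L') a stable logic map (preimages of theories are theories and preimages of prime theories are prime theories). Then h preserves disjunction and conjunction up to logical equivalence: h(a ∨ b) ≡ h(a) ∨ h(b) and h(a ∧ b) ≡ h(a) ∧ h(b), where c ≡ d means c and d belong to exactly the same prime theories of L'. -/
variable {α : Type*} {β : Type*}

def PrimeTheory {γ : Type*} (Th : Set (Set γ)) (T : Set γ) : Prop :=
  T ∈ Th ∧ ∀ 𝒯 ⊆ Th, 𝒯.Finite → 𝒯.Nonempty → T = ⋂₀ 𝒯 → T ∈ 𝒯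

/-- `S_a`, the set of prime theories containing `a`. -/
def primeSet {γ : Type*} (Th : Set (Set γ)) (a : γ) : Set (Set γ) :=
  {P | PrimeTheory Th P ∧ a ∈ P}

theorem stmt13 (Th : Set (Set α)) (Th' : Set (Set β))
    (and or : α → α → α) (and' or' : β → β → β)
    (hne : Th.Nonempty) (hne' : Th'.Nonempty)
    (hinter : ∀ 𝒯 ⊆ Th, 𝒯.Nonempty → ⋂₀ 𝒯 ∈ Th)
    (hinter' : ∀ 𝒯 ⊆ Th', 𝒯.Nonempty → ⋂₀ 𝒯 ∈ Th')
    (hgen : ∀ T ∈ Th, ∃ 𝒯 ⊆ {P | PrimeTheory Th P}, 𝒯.Nonempty ∧ T = ⋂₀ 𝒯)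
    (hgen' : ∀ T ∈ Th', ∃ 𝒯 ⊆ {P | PrimeTheory Th' P}, 𝒯.Nonempty ∧ T = ⋂₀ 𝒯)
    (hand : ∀ a b : α, ∀ P, PrimeTheory Th P → (and a b ∈ P ↔ a ∈ P ∧ b ∈ P))
    (hor : ∀ a b : α, ∀ P, PrimeTheory Th P → (or a b ∈ P ↔ a ∈ P ∨ b ∈ P))
    (hand' : ∀ a b : β, ∀ P, PrimeTheory Th' P → (and' a b ∈ P ↔ a ∈ P ∧ b ∈ P))
    (hor' : ∀ a b : β, ∀ P, PrimeTheory Th' P → (or' a b ∈ P ↔ a ∈ P ∨ b ∈ P))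
    (h : α → β)
    (hlog : ∀ T' ∈ Th', h ⁻¹' T' ∈ Th)
    (hstable : ∀ P', PrimeTheory Th' P' → PrimeTheory Th (h ⁻¹' P')) :
    ∀ a b : α,
      primeSet Th' (h (or a b)) = primeSet Th' (or' (h a) (h b)) ∧
      primeSet Th' (h (and a b)) = primeSet Th' (and' (h a) (h b)) := by
  intro a b
  constructor
  · ext P
    simp only [primeSet, Set.mem_setOf_eq, and_congr_right_iff]
    intro hP
    have hPre := hstable P hP
    rw [hor' _ _ _ hP]
    exact hor a b _ hPre
  · ext P
    simp only [primeSet, Set.mem_setOf_eq, and_congr_right_iff]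
    intro hP
    have hPre := hstable P hP
    rw [hand' _ _ _ hP]
    exact hand a b _ hPre
end

section
/- Let A, A' be Heyting algebras and h : A → A' a map preserving ∧, ∨, ⊤, ⊥ and satisfying h(a → b) ≤ h(a) → h(b), with the strong stability property: for every prime filter P' of A' and prime filter P of A with h⁻¹(P') ⊆ P, there exists a prime filter Q' of A' with P' ⊆ Q' and h⁻¹(Q') = P. Then h preserves implication: h(a → b) = h(a) → h(b) for all a, b ∈ A. -/
variable {α : Type*} {β : Type*}

def IsLatFilter {γ : Type*} [Lattice γ] (F : Set γ) : Prop :=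
  F.Nonempty ∧ (∀ x ∈ F, ∀ y, x ≤ y → y ∈ F) ∧ ∀ x ∈ F, ∀ y ∈ F, x ⊓ y ∈ F

def IsPrimeFilter {γ : Type*} [Lattice γ] (F : Set γ) : Prop :=
  IsLatFilter F ∧ F ≠ Set.univ ∧ ∀ a b : γ, a ⊔ b ∈ F → a ∈ F ∨ b ∈ F

/-- Separation lemma: a filter avoiding an element extends to a prime filter avoiding it. -/
lemma exists_prime_filter {γ : Type*} [DistribLattice γ] [BoundedOrder γ]
    {F : Set γ} (hF : IsLatFilter F) {b : γ} (hb : b ∉ F) :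
    ∃ Q : Set γ, IsPrimeFilter Q ∧ F ⊆ Q ∧ b ∉ Q := by
  obtain ⟨hne, hup, hinf⟩ := hF
  have hPF : Order.IsPFilter F := Order.IsPFilter.of_def hne
    (fun x hx y hy => ⟨x ⊓ y, hinf x hx y hy, inf_le_left, inf_le_right⟩)
    (fun {x y} hxy hx => hup x hx y hxy)
  set Fp := hPF.toPFilter with hFp
  have hFpc : (Fp : Set γ) = F := rfl
  have hdisj : Disjoint (Fp : Set γ) ((Order.Ideal.principal b : Order.Ideal γ) : Set γ) := by
    rw [Set.disjoint_left]
    intro x hx hx'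
    exact hb (hup x hx b hx')
  obtain ⟨J, hJprime, hbJ, hJdisj⟩ :=
    DistribLattice.prime_ideal_of_disjoint_filter_ideal hdisj
  refine ⟨(J : Set γ)ᶜ, ⟨⟨⟨⊤, fun h => hJprime.top_notMem h⟩,
      fun x hx y hxy hy => hx (J.lower hxy hy),
      fun x hx y hy => fun hxy => (hJprime.mem_or_mem hxy).elim hx hy⟩,
      ?_, fun a c hac => ?_⟩, ?_, ?_⟩
  · intro h
    have : ⊥ ∈ (J : Set γ)ᶜ := h ▸ Set.mem_univ _
    exact this J.bot_mem
  · by_contra hc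
    push_neg at hc
    obtain ⟨ha, hcc⟩ := hc
    simp only [Set.notMem_compl_iff] at ha hcc
    exact hac (J.sup_mem ha hcc)
  · intro x hx hx'
    exact Set.disjoint_left.mp hJdisj hx hx'
  · intro hbc
    exact hbc (hbJ Order.Ideal.mem_principal_self)

theorem stmt19 [HeytingAlgebra α] [HeytingAlgebra β] (h : α → β)
    (hinf : ∀ a b : α, h (a ⊓ b) = h a ⊓ h b)
    (hsup : ∀ a b : α, h (a ⊔ b) = h a ⊔ h b)
    (htop : h ⊤ = ⊤) (hbot : h ⊥ = ⊥)
    (hhimp : ∀ a b : α, h (a ⇨ b) ≤ h a ⇨ h b)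
    (hstrong : ∀ P' : Set β, IsPrimeFilter P' → ∀ P : Set α, IsPrimeFilter P →
      h ⁻¹' P' ⊆ P → ∃ Q' : Set β, IsPrimeFilter Q' ∧ P' ⊆ Q' ∧ h ⁻¹' Q' = P) :
    ∀ a b : α, h (a ⇨ b) = h a ⇨ h b := by
  intro a b
  refine le_antisymm (hhimp a b) ?_
  by_contra hle
  -- find prime filter P' containing h a ⇨ h b but not h (a ⇨ b)
  have hF0 : IsLatFilter {z : β | h a ⇨ h b ≤ z} :=
    ⟨⟨_, le_refl _⟩, fun x hx y hxy => le_trans hx hxy, fun x hx y hy => le_inf hx hy⟩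
  obtain ⟨P', hP', hFP', hnP'⟩ := exists_prime_filter hF0 (by simpa using hle)
  -- P = preimage is a prime filter
  have hP : IsPrimeFilter (h ⁻¹' P') := by
    obtain ⟨⟨hne, hup, hinfc⟩, hproper, hprime⟩ := hP'
    refine ⟨⟨⟨⊤, ?_⟩, fun x hx y hxy => ?_, fun x hx y hy => ?_⟩, ?_, fun x y hxy => ?_⟩
    · simp only [Set.mem_preimage, htop]
      obtain ⟨w, hw⟩ := hne
      exact hup w hw ⊤ le_top
    · refine hup (h x) hx (h y) ?_
      have : h x = h x ⊓ h y := by rw [← hinf, inf_eq_left.mpr hxy]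
      rw [this]; exact inf_le_right
    · simp only [Set.mem_preimage, hinf]; exact hinfc _ hx _ hy
    · intro hc
      have hbotmem : (⊥ : α) ∈ h ⁻¹' P' := hc ▸ Set.mem_univ _
      have : (⊥ : β) ∈ P' := by simpa [hbot] using hbotmem
      exact hproper (Set.eq_univ_of_forall fun z => hup ⊥ this z bot_le)
    · simp only [Set.mem_preimage, hsup] at hxy ⊢
      exact hprime _ _ hxy
  -- a ⇨ b is not in P
  have himpnP : a ⇨ b ∉ h ⁻¹' P' := fun hc => hnP' hc
  obtain ⟨⟨hPne, hPup, hPinf⟩, hPproper, hPprime⟩ := hP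
  -- filter generated by P and a
  set G : Set α := {z | ∃ p ∈ h ⁻¹' P', p ⊓ a ≤ z} with hG
  have hGF : IsLatFilter G := by
    refine ⟨⟨a, ?_⟩, fun x hx y hxy => ?_, fun x hx y hy => ?_⟩
    · obtain ⟨w, hw⟩ := hPne
      exact ⟨w, hw, inf_le_right⟩
    · obtain ⟨p, hp, hpx⟩ := hx
      exact ⟨p, hp, le_trans hpx hxy⟩
    · obtain ⟨p, hp, hpx⟩ := hx
      obtain ⟨q, hq, hqy⟩ := hy
      refine ⟨p ⊓ q, hPinf p hp q hq, ?_⟩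
      calc (p ⊓ q) ⊓ a ≤ (p ⊓ a) ⊓ (q ⊓ a) := by
            simp [inf_assoc, inf_comm, inf_left_comm, le_refl]
        _ ≤ x ⊓ y := inf_le_inf hpx hqy
  have hbG : b ∉ G := by
    rintro ⟨p, hp, hpb⟩
    exact himpnP (hPup p hp (a ⇨ b) (le_himp_iff.mpr hpb))
  obtain ⟨Q, hQ, hGQ, hbQ⟩ := exists_prime_filter hGF hbG
  have hPQ : h ⁻¹' P' ⊆ Q := fun p hp => hGQ ⟨p, hp, inf_le_left⟩
  obtain ⟨Q', hQ', hPQ', hQQ'⟩ := hstrong P' hP' Q hQ hPQ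
  have haQ : a ∈ Q := hGQ (by obtain ⟨w, hw⟩ := hPne; exact ⟨w, hw, inf_le_right⟩)
  have haQ' : h a ∈ Q' := by rw [← hQQ'] at haQ; exact haQ
  have himpQ' : h a ⇨ h b ∈ Q' := hPQ' (hFP' (le_refl _))
  obtain ⟨⟨_, hQ'up, hQ'inf⟩, _, _⟩ := hQ'
  have hbQ' : h b ∈ Q' := hQ'up _ (hQ'inf _ himpQ' _ haQ') _ himp_inf_le
  have : b ∈ Q := by rw [← hQQ']; exact hbQ'
  exact hbQ this
end
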